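/- Let R be an elliptic root system belonging to (F,I) with a signed marking a. If (F¹,I¹) and (F²,I²) are two hyperbolic extensions of (F,I), then there exists a linear isomorphism ψ : F¹ → F² such that ψ(x) = x for all x ∈ F and I²(ψ(x),ψ(y)) = I¹(x,y) for all x,y ∈ F¹; that is, a hyperbolic extension is unique up to isomorphism. -/

import Mathlib

open scoped TensorProduct

/-- The radical `{x | I(x,y) = 0 for all y}` of a bilinear form. -/
def bilinRadical {V : Type*} [AddCommGroup V] [Module ℝ V]
    (I : V →ₗ[ℝ] V →ₗ[ℝ] ℝ) : Submodule ℝ V where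
  carrier := {x | ∀ y, I x y = 0}
  add_mem' {a b} ha hb := by intro y; simp [ha y, hb y]
  zero_mem' := by intro y; simp
  smul_mem' c x hx := by intro y; simp [hx y]

/-- The coroot `α^∨ = 2α / I(α,α)` of a non-isotropic vector `α`. -/
noncomputable def coroot {V : Type*} [AddCommGroup V] [Module ℝ V]
    (I : V →ₗ[ℝ] V →ₗ[ℝ] ℝ) (α : V) : V := (2 / I α α) • α

/-- The contraction map `F ⊗_ℤ ℝ → F`, `x ⊗ r ↦ r • x`. -/
noncomputable def smulContract {V : Type*} [AddCommGroup V] [Module ℝ V] :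
    (V ⊗[ℤ] ℝ) →ₗ[ℤ] V :=
  TensorProduct.lift (LinearMap.mk₂ ℤ (fun (x : V) (r : ℝ) => r • x)
    (fun x y r => smul_add r x y)
    (fun c x r => (smul_comm c r x).symm)
    (fun x r s => add_smul r s x)
    (fun c x r => smul_assoc c r x))

/-- The natural map `Q ⊗_ℤ ℝ → F` induced by the inclusion of an additive subgroup
`Q` of a real vector space `F`. -/
noncomputable def latticeMap {V : Type*} [AddCommGroup V] [Module ℝ V]
    (Q : AddSubgroup V) : (↥Q ⊗[ℤ] ℝ) →ₗ[ℤ] V :=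
  smulContract.comp (TensorProduct.map Q.subtype.toIntLinearMap LinearMap.id)

lemma mem_bilinRadical' {V : Type*} [AddCommGroup V] [Module ℝ V]
    {I : V →ₗ[ℝ] V →ₗ[ℝ] ℝ} {x : V} : x ∈ bilinRadical I ↔ ∀ y, I x y = 0 := Iff.rfl

/-- Auxiliary: a vector outside the image of `ι`. -/
lemma aux_exists_outside {F : Type*} [AddCommGroup F] [Module ℝ F] [FiniteDimensional ℝ F]
    {F₁ : Type*} [AddCommGroup F₁] [Module ℝ F₁] [FiniteDimensional ℝ F₁]
    (hlt : Module.finrank ℝ F < Module.finrank ℝ F₁)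
    (ι₁ : F →ₗ[ℝ] F₁) (hι₁ : Function.Injective ι₁) :
    ∃ b₁ : F₁, b₁ ∉ LinearMap.range ι₁ := by
  by_contra h
  push_neg at h
  have hT : LinearMap.range ι₁ = ⊤ := by
    rw [Submodule.eq_top_iff']; exact h
  have h2 := LinearMap.finrank_range_of_inj hι₁
  rw [hT, finrank_top] at h2
  omega

/-- Auxiliary: the decomposition `F₁ = ι₁(F) ⊕ ℝ b₁`. -/
lemma aux_equiv {F : Type*} [AddCommGroup F] [Module ℝ F] [FiniteDimensional ℝ F]
    {F₁ : Type*} [AddCommGroup F₁] [Module ℝ F₁] [FiniteDimensional ℝ F₁]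
    (hd : Module.finrank ℝ F + 1 = Module.finrank ℝ F₁)
    (ι₁ : F →ₗ[ℝ] F₁) (hι₁ : Function.Injective ι₁)
    (b₁ : F₁) (hb₁ : b₁ ∉ LinearMap.range ι₁) :
    ∃ e : (F × ℝ) ≃ₗ[ℝ] F₁, ∀ p : F × ℝ, e p = ι₁ p.1 + p.2 • b₁ := by
  set φ : (F × ℝ) →ₗ[ℝ] F₁ :=
    ι₁.comp (LinearMap.fst ℝ F ℝ) +
      (LinearMap.toSpanSingleton ℝ F₁ b₁).comp (LinearMap.snd ℝ F ℝ) with hφ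
  have hφapp : ∀ p : F × ℝ, φ p = ι₁ p.1 + p.2 • b₁ := by
    intro p
    simp [hφ, LinearMap.toSpanSingleton_apply]
  have hinj : Function.Injective φ := by
    rw [← LinearMap.ker_eq_bot, Submodule.eq_bot_iff]
    rintro ⟨x, t⟩ hxt
    rw [LinearMap.mem_ker, hφapp] at hxt
    simp only at hxt
    by_cases ht : t = 0
    · subst ht
      simp only [zero_smul, add_zero] at hxt
      have hx : x = 0 := hι₁ (by rw [hxt, map_zero])
      simp [hx]
    · exfalso
      apply hb₁
      refine ⟨(-t⁻¹) • x, ?_⟩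
      rw [map_smul]
      have : ι₁ x = -(t • b₁) := by linear_combination (norm := module) hxt
      rw [this]
      rw [smul_neg, smul_smul]
      field_simp
      simp
  have hdim : Module.finrank ℝ (F × ℝ) = Module.finrank ℝ F₁ := by
    rw [Module.finrank_prod, Module.finrank_self]
    exact hd
  exact ⟨φ.linearEquivOfInjective hinj hdim, fun p => by
    rw [LinearMap.linearEquivOfInjective_apply, hφapp]⟩

/-- Auxiliary: the pairing of `b₁` with a radical vector `b ∉ ℝa` is nonzero. -/
lemma aux_rad {F : Type*} [AddCommGroup F] [Module ℝ F] [FiniteDimensional ℝ F]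
    {F₁ : Type*} [AddCommGroup F₁] [Module ℝ F₁] [FiniteDimensional ℝ F₁]
    (I : F →ₗ[ℝ] F →ₗ[ℝ] ℝ)
    (ι₁ : F →ₗ[ℝ] F₁) (hι₁ : Function.Injective ι₁)
    (I₁ : F₁ →ₗ[ℝ] F₁ →ₗ[ℝ] ℝ)
    (hsymm₁ : ∀ x y, I₁ x y = I₁ y x)
    (hres₁ : ∀ x y : F, I₁ (ι₁ x) (ι₁ y) = I x y)
    (a : F) (hrad₁ : bilinRadical I₁ = Submodule.span ℝ {ι₁ a})
    (b : F) (hIb : ∀ y, I b y = 0) (hb_not : b ∉ Submodule.span ℝ {a})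
    (b₁ : F₁) (e : (F × ℝ) ≃ₗ[ℝ] F₁) (he : ∀ p : F × ℝ, e p = ι₁ p.1 + p.2 • b₁) :
    I₁ b₁ (ι₁ b) ≠ 0 := by
  intro h0
  have h0' : I₁ (ι₁ b) b₁ = 0 := by rw [hsymm₁]; exact h0
  have hmem : ι₁ b ∈ bilinRadical I₁ := by
    rw [mem_bilinRadical']
    intro y
    obtain ⟨⟨x, t⟩, rfl⟩ := e.surjective y
    rw [he]
    simp only [map_add, map_smul, smul_eq_mul, hres₁, hIb x, h0', mul_zero, add_zero]
  rw [hrad₁, Submodule.mem_span_singleton] at hmem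
  obtain ⟨c, hc⟩ := hmem
  apply hb_not
  rw [Submodule.mem_span_singleton]
  exact ⟨c, hι₁ (by rw [map_smul, hc])⟩

/-- A hyperbolic extension of `(F,I)` (for an elliptic root system `R` with a
signed marking `a`) is unique up to an isomorphism which is the identity on `F`. -/
theorem hyperbolicExtension_unique
    {F : Type*} [AddCommGroup F] [Module ℝ F] [FiniteDimensional ℝ F]
    (l : ℕ) (hl : 1 ≤ l) (hdim : Module.finrank ℝ F = l + 2)
    (I : F →ₗ[ℝ] F →ₗ[ℝ] ℝ)
    (hsymm : ∀ x y, I x y = I y x)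
    (hsemi : (∀ x, 0 ≤ I x x) ∨ (∀ x, I x x ≤ 0))
    (hrad : Module.finrank ℝ ↥(bilinRadical I) = 2)
    (R : Set F)
    (hniso : ∀ α ∈ R, I α α ≠ 0)
    (hfull : Function.Bijective (latticeMap (AddSubgroup.closure R)))
    (hint : ∀ α ∈ R, ∀ β ∈ R, ∃ n : ℤ, I α (coroot I β) = n)
    (hrefl : ∀ α ∈ R, (fun u => u - (I u (coroot I α)) • α) '' R = R)
    (hirr : ∀ R₁ R₂ : Set F, R = R₁ ∪ R₂ →
      (∀ x ∈ R₁, ∀ y ∈ R₂, I x y = 0) → R₁ = ∅ ∨ R₂ = ∅)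
    -- a signed marking `a`
    (a : F) (ha0 : a ≠ 0) (harad : a ∈ bilinRadical I)
    (haQ : a ∈ AddSubgroup.closure R)
    (hamark : ∀ x ∈ AddSubgroup.closure R,
      (∃ r : ℝ, x = r • a) → ∃ n : ℤ, x = (n : ℤ) • a)
    -- two hyperbolic extensions `(F¹,I¹)` and `(F²,I²)`
    {F₁ : Type*} [AddCommGroup F₁] [Module ℝ F₁] [FiniteDimensional ℝ F₁]
    (hdim₁ : Module.finrank ℝ F₁ = l + 3)
    (ι₁ : F →ₗ[ℝ] F₁) (hι₁ : Function.Injective ι₁)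
    (I₁ : F₁ →ₗ[ℝ] F₁ →ₗ[ℝ] ℝ)
    (hsymm₁ : ∀ x y, I₁ x y = I₁ y x)
    (hres₁ : ∀ x y : F, I₁ (ι₁ x) (ι₁ y) = I x y)
    (hrad₁ : bilinRadical I₁ = Submodule.span ℝ {ι₁ a})
    {F₂ : Type*} [AddCommGroup F₂] [Module ℝ F₂] [FiniteDimensional ℝ F₂]
    (hdim₂ : Module.finrank ℝ F₂ = l + 3)
    (ι₂ : F →ₗ[ℝ] F₂) (hι₂ : Function.Injective ι₂)
    (I₂ : F₂ →ₗ[ℝ] F₂ →ₗ[ℝ] ℝ)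
    (hsymm₂ : ∀ x y, I₂ x y = I₂ y x)
    (hres₂ : ∀ x y : F, I₂ (ι₂ x) (ι₂ y) = I x y)
    (hrad₂ : bilinRadical I₂ = Submodule.span ℝ {ι₂ a}) :
    ∃ ψ : F₁ ≃ₗ[ℝ] F₂,
      (∀ x : F, ψ (ι₁ x) = ι₂ x) ∧
      (∀ x y : F₁, I₂ (ψ x) (ψ y) = I₁ x y) := by
  classical
  -- choose `b` in the radical, independent from `a`
  have hspan_le : Submodule.span ℝ {a} ≤ bilinRadical I := by
    rw [Submodule.span_le]; simpa using harad
  have hspan_lt : Submodule.span ℝ {a} < bilinRadical I := by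
    refine lt_of_le_of_ne hspan_le fun h => ?_
    have h2 := hrad
    rw [← h, finrank_span_singleton ha0] at h2
    omega
  obtain ⟨b, hbW, hb_not⟩ := SetLike.exists_of_lt hspan_lt
  have hIb : ∀ y, I b y = 0 := hbW
  have hIa : ∀ y, I a y = 0 := harad
  -- vectors outside the images
  obtain ⟨b₁, hb₁⟩ := aux_exists_outside (F := F) (F₁ := F₁) (by omega) ι₁ hι₁
  obtain ⟨b₂, hb₂⟩ := aux_exists_outside (F := F) (F₁ := F₂) (by omega) ι₂ hι₂
  obtain ⟨e₁, he₁⟩ := aux_equiv (by omega) ι₁ hι₁ b₁ hb₁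
  obtain ⟨e₂', he₂'⟩ := aux_equiv (by omega) ι₂ hι₂ b₂ hb₂
  -- the functionals determined by the two extensions
  set lam₁ : F →ₗ[ℝ] ℝ := (I₁ b₁).comp ι₁ with hlam₁def
  set lam₂ : F →ₗ[ℝ] ℝ := (I₂ b₂).comp ι₂ with hlam₂def
  have hlam₁app : ∀ x, lam₁ x = I₁ b₁ (ι₁ x) := fun _ => rfl
  have hlam₂app : ∀ x, lam₂ x = I₂ b₂ (ι₂ x) := fun _ => rfl
  have hrada₁ : ∀ y, I₁ (ι₁ a) y = 0 := by
    have hm : ι₁ a ∈ bilinRadical I₁ := by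
      rw [hrad₁]; exact Submodule.mem_span_singleton_self _
    exact hm
  have hrada₂ : ∀ y, I₂ (ι₂ a) y = 0 := by
    have hm : ι₂ a ∈ bilinRadical I₂ := by
      rw [hrad₂]; exact Submodule.mem_span_singleton_self _
    exact hm
  have hlam₁a : lam₁ a = 0 := by
    rw [hlam₁app, hsymm₁]; exact hrada₁ b₁
  have hlam₂a : lam₂ a = 0 := by
    rw [hlam₂app, hsymm₂]; exact hrada₂ b₂
  have hlam₁b : lam₁ b ≠ 0 :=
    aux_rad I ι₁ hι₁ I₁ hsymm₁ hres₁ a hrad₁ b hIb hb_not b₁ e₁ he₁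
  have hlam₂b : lam₂ b ≠ 0 :=
    aux_rad I ι₂ hι₂ I₂ hsymm₂ hres₂ a hrad₂ b hIb hb_not b₂ e₂' he₂'
  set s : ℝ := lam₁ b / lam₂ b with hs
  have hs0 : s ≠ 0 := div_ne_zero hlam₁b hlam₂b
  set μ : F →ₗ[ℝ] ℝ := lam₁ - s • lam₂ with hμ
  have hμapp : ∀ x, μ x = lam₁ x - s * lam₂ x := fun _ => rfl
  -- μ vanishes on the radical
  have hμrad : ∀ r ∈ bilinRadical I, μ r = 0 := by
    have hμa : μ a = 0 := by rw [hμapp, hlam₁a, hlam₂a]; ring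
    have hμb : μ b = 0 := by
      rw [hμapp, hs]; field_simp; ring
    have hli : LinearIndependent ℝ ![(⟨b, hbW⟩ : bilinRadical I), ⟨a, harad⟩] := by
      rw [linearIndependent_fin2]
      constructor
      · simp only [Matrix.cons_val_one, Matrix.head_cons]
        intro h; exact ha0 (congrArg Subtype.val h)
      · intro c hc
        apply hb_not
        rw [Submodule.mem_span_singleton]
        simp only [Matrix.cons_val_one, Matrix.head_cons, Matrix.cons_val_zero] at hc
        exact ⟨c, by simpa using congrArg Subtype.val hc⟩
    have hcard : Fintype.card (Fin 2) = Module.finrank ℝ ↥(bilinRadical I) := by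
      simp [hrad]
    let B := basisOfLinearIndependentOfCardEqFinrank hli hcard
    have hBc : ⇑B = ![⟨b, hbW⟩, ⟨a, harad⟩] :=
      coe_basisOfLinearIndependentOfCardEqFinrank hli hcard
    have hcomp : μ.comp (bilinRadical I).subtype = 0 := by
      apply B.ext
      intro i
      fin_cases i <;>
        simp [hBc, hμa, hμb]
    intro r hr
    have hr0 := LinearMap.ext_iff.mp hcomp ⟨r, hr⟩
    simpa using hr0
  -- μ is realized by a vector z
  have hker : LinearMap.ker I = bilinRadical I := by
    ext x; simp [LinearMap.mem_ker, mem_bilinRadical', LinearMap.ext_iff]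
  have hrange : LinearMap.range I = (bilinRadical I).dualAnnihilator := by
    apply Submodule.eq_of_le_of_finrank_le
    · rintro _ ⟨w, rfl⟩
      rw [Submodule.mem_dualAnnihilator]
      intro v hv
      rw [hsymm]; exact hv w
    · have h2 := LinearMap.finrank_range_add_finrank_ker I
      rw [hker, hrad, hdim] at h2
      have h3 : Module.finrank ℝ ((bilinRadical I).dualAnnihilator) =
          Module.finrank ℝ (F ⧸ bilinRadical I) :=
        (Subspace.quotEquivAnnihilator (bilinRadical I)).symm.finrank_eq
      have h4 := Submodule.finrank_quotient_add_finrank (bilinRadical I)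
      rw [hrad, hdim] at h4
      rw [h3]
      omega
  obtain ⟨z, hz⟩ : ∃ z, I z = μ := by
    have hm : μ ∈ LinearMap.range I := by
      rw [hrange, Submodule.mem_dualAnnihilator]; exact hμrad
    exact hm
  -- build the vector B₂ completing ι₂(F)
  set c₁ : ℝ := I₁ b₁ b₁ with hc₁
  set Bm : F₂ := s • b₂ + ι₂ z with hBm
  have hmid : ∀ x, I₂ Bm (ι₂ x) = lam₁ x := by
    intro x
    have hzx : I z x = lam₁ x - s * lam₂ x := by rw [hz]; exact hμapp x
    rw [hBm]
    simp only [map_add, LinearMap.add_apply, map_smul, LinearMap.smul_apply,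
      smul_eq_mul, hres₂, hzx]
    rw [← hlam₂app]
    ring
  set t0 : ℝ := (c₁ - I₂ Bm Bm) / (2 * lam₁ b) with ht0
  set B₂ : F₂ := Bm + t0 • ι₂ b with hB₂
  have hB₂lam : ∀ x, I₂ B₂ (ι₂ x) = lam₁ x := by
    intro x
    rw [hB₂]
    simp only [map_add, LinearMap.add_apply, map_smul, LinearMap.smul_apply,
      smul_eq_mul, hres₂, hmid, hIb x]
    ring
  have hB₂c : I₂ B₂ B₂ = c₁ := by
    have h1 : I₂ Bm (ι₂ b) = lam₁ b := hmid b
    have h2 : I₂ (ι₂ b) Bm = lam₁ b := by rw [hsymm₂]; exact h1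
    have h3 : I₂ (ι₂ b) (ι₂ b) = 0 := by rw [hres₂]; exact hIb b
    rw [hB₂]
    simp only [map_add, LinearMap.add_apply, map_smul, LinearMap.smul_apply,
      smul_eq_mul, h1, h2, h3]
    rw [ht0]
    field_simp
    ring
  have hB₂mem : B₂ ∉ LinearMap.range ι₂ := by
    rintro ⟨w, hw⟩
    apply hb₂
    refine ⟨s⁻¹ • (w - z - t0 • b), ?_⟩
    rw [map_smul, map_sub, map_sub, map_smul, hw, hB₂, hBm]
    rw [smul_sub, smul_sub]
    rw [show s⁻¹ • (s • b₂ + ι₂ z + t0 • ι₂ b) = s⁻¹ • (s • b₂) + s⁻¹ • ι₂ z + s⁻¹ • (t0 • ι₂ b) by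
      rw [smul_add, smul_add]]
    rw [smul_smul, inv_mul_cancel₀ hs0, one_smul]
    abel
  obtain ⟨e₂, he₂⟩ := aux_equiv (by omega) ι₂ hι₂ B₂ hB₂mem
  refine ⟨e₁.symm.trans e₂, ?_, ?_⟩
  · intro x
    have h1 : e₁ (x, 0) = ι₁ x := by rw [he₁]; simp
    have h2 : e₁.symm (ι₁ x) = (x, 0) := by rw [← h1, e₁.symm_apply_apply]
    rw [LinearEquiv.trans_apply, h2, he₂]
    simp
  · intro u v
    obtain ⟨⟨x, t⟩, rfl⟩ := e₁.surjective u
    obtain ⟨⟨y, r⟩, rfl⟩ := e₁.surjective v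
    have hu : (e₁.symm.trans e₂) (e₁ (x, t)) = ι₂ x + t • B₂ := by
      rw [LinearEquiv.trans_apply, e₁.symm_apply_apply, he₂]
    have hv : (e₁.symm.trans e₂) (e₁ (y, r)) = ι₂ y + r • B₂ := by
      rw [LinearEquiv.trans_apply, e₁.symm_apply_apply, he₂]
    rw [hu, hv, he₁ (x, t), he₁ (y, r)]
    simp only [map_add, LinearMap.add_apply, map_smul, LinearMap.smul_apply,
      smul_eq_mul, hres₁, hres₂]
    rw [hsymm₂ (ι₂ x) B₂, hB₂lam x, hB₂lam y, hB₂c, hsymm₁ (ι₁ x) b₁]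
    rw [hlam₁app, hlam₁app, hc₁]
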